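/- Let T > 0, C₁, C₂ ≥ 0, let A : [0,T] → Matrix(n,n,ℝ) and B : [0,T] → Matrix(n,m,ℝ) satisfy ‖A(s)‖ ≤ C₁ and ‖B(s)‖ ≤ C₂ (operator norms) for almost every s ∈ [0,T], and let δ : [0,T] → ℝᵐ be measurable with ∫₀ᵀ ‖δ(t)‖² dt < ∞. Suppose y : [0,T] → ℝⁿ is continuous, the function s ↦ A(s)·y(s) + B(s)·δ(s) is integrable on [0,T], and y(t) = ∫₀ᵗ (A(s)·y(s) + B(s)·δ(s)) ds for all t ∈ [0,T]. Then for every s ∈ [0,T], ‖y(s)‖ ≤ C₂ · √T · e^{C₁ T} · (∫₀ᵀ ‖δ(t)‖² dt)^{1/2}. -/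

import Mathlib

open MeasureTheory Set

/-- Gronwall-type continuous-dependence estimate for the variational equation:
if `‖A(s)‖ ≤ C₁`, `‖B(s)‖ ≤ C₂` (Euclidean operator norms) a.e. on `[0,T]`, `δ` is measurable
and square-integrable, and `y` is a continuous solution of
`y(t) = ∫₀ᵗ (A(s)·y(s) + B(s)·δ(s)) ds` on `[0,T]`, then
`‖y(s)‖ ≤ C₂ √T e^{C₁ T} (∫₀ᵀ ‖δ‖²)^{1/2}` for every `s ∈ [0,T]`. -/
theorem norm_le_of_linear_integral_equation
    {n m : ℕ} (T C₁ C₂ : ℝ) (hT : 0 < T) (hC₁ : 0 ≤ C₁) (hC₂ : 0 ≤ C₂)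
    (A : ℝ → Matrix (Fin n) (Fin n) ℝ) (B : ℝ → Matrix (Fin n) (Fin m) ℝ)
    (hA : ∀ᵐ s ∂(volume.restrict (Icc (0 : ℝ) T)),
      ‖LinearMap.toContinuousLinearMap (Matrix.toEuclideanLin (A s))‖ ≤ C₁)
    (hB : ∀ᵐ s ∂(volume.restrict (Icc (0 : ℝ) T)),
      ‖LinearMap.toContinuousLinearMap (Matrix.toEuclideanLin (B s))‖ ≤ C₂)
    (δ : ℝ → EuclideanSpace ℝ (Fin m)) (hδmeas : Measurable δ)
    (hδsq : IntegrableOn (fun t => ‖δ t‖ ^ 2) (Icc (0 : ℝ) T) volume)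
    (y : ℝ → EuclideanSpace ℝ (Fin n)) (hy : ContinuousOn y (Icc 0 T))
    (hint : IntegrableOn
      (fun s => Matrix.toEuclideanLin (A s) (y s) + Matrix.toEuclideanLin (B s) (δ s))
      (Icc (0 : ℝ) T) volume)
    (heq : ∀ t ∈ Icc (0 : ℝ) T,
      y t = ∫ s in (0 : ℝ)..t,
        (Matrix.toEuclideanLin (A s) (y s) + Matrix.toEuclideanLin (B s) (δ s))) :
    ∀ s ∈ Icc (0 : ℝ) T,
      ‖y s‖ ≤ C₂ * Real.sqrt T * Real.exp (C₁ * T) *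
        Real.sqrt (∫ t in Icc (0 : ℝ) T, ‖δ t‖ ^ 2) := by
  set I := ∫ t in Icc (0:ℝ) T, ‖δ t‖ ^ 2 with hIdef
  set K0 := C₂ * Real.sqrt T * Real.sqrt I with hK0def
  have hK0n : 0 ≤ K0 :=
    mul_nonneg (mul_nonneg hC₂ (Real.sqrt_nonneg _)) (Real.sqrt_nonneg _)
  -- integrability of ‖δ‖
  have hδnm : AEStronglyMeasurable (fun t => ‖δ t‖)
      (volume.restrict (Icc (0:ℝ) T)) := hδmeas.norm.aestronglyMeasurable
  have hμfin : volume (Icc (0:ℝ) T) < ⊤ := by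
    rw [Real.volume_Icc]; exact ENNReal.ofReal_lt_top
  have hδint : IntegrableOn (fun t => ‖δ t‖) (Icc (0:ℝ) T) volume := by
    have hc : IntegrableOn (fun _ : ℝ => (1:ℝ)) (Icc (0:ℝ) T) volume :=
      integrableOn_const hμfin.ne
    refine (hc.add hδsq).mono' hδnm (ae_of_all _ fun t => ?_)
    simp only [Pi.add_apply]
    rw [Real.norm_of_nonneg (norm_nonneg _)]
    nlinarith [norm_nonneg (δ t), sq_nonneg (‖δ t‖ - 1)]
  -- Cauchy-Schwarz
  have hCS : ∫ t in Icc (0:ℝ) T, ‖δ t‖ ≤ Real.sqrt T * Real.sqrt I := by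
    have hpq : Real.HolderConjugate 2 2 := (Real.holderConjugate_iff_eq_conjExponent one_lt_two).2 (by norm_num)
    have h1 : MemLp (fun _ : ℝ => (1:ℝ)) (ENNReal.ofReal 2)
        (volume.restrict (Icc (0:ℝ) T)) := by
      simpa using (memLp_const (μ := volume.restrict (Icc (0:ℝ) T)) (1:ℝ) (p := 2))
    have h2 : MemLp (fun t => ‖δ t‖) (ENNReal.ofReal 2)
        (volume.restrict (Icc (0:ℝ) T)) := by
      have := (memLp_two_iff_integrable_sq hδnm).2 hδsq
      simpa using this
    have := integral_mul_le_Lp_mul_Lq_of_nonneg hpq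
      (f := fun _ : ℝ => (1:ℝ)) (g := fun t => ‖δ t‖)
      (ae_of_all _ fun _ => zero_le_one) (ae_of_all _ fun t => norm_nonneg _) h1 h2
    simp only [one_mul] at this
    refine this.trans ?_
    have e1 : ∫ a in Icc (0:ℝ) T, (1:ℝ) ^ (2:ℝ) = T := by
      simp [Real.volume_Icc, ENNReal.toReal_ofReal hT.le, hT.le]
    have e2 : ∫ a in Icc (0:ℝ) T, ‖δ a‖ ^ (2:ℝ) = I := by
      rw [hIdef]
      refine setIntegral_congr_fun measurableSet_Icc fun t _ => ?_
      rw [← Real.rpow_natCast ‖δ t‖ 2]; norm_num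
    rw [e1, e2, ← Real.sqrt_eq_rpow, ← Real.sqrt_eq_rpow]
  -- pointwise a.e. bound on the integrand
  have hbound : ∀ᵐ s ∂(volume.restrict (Icc (0:ℝ) T)),
      ‖Matrix.toEuclideanLin (A s) (y s) + Matrix.toEuclideanLin (B s) (δ s)‖
        ≤ C₁ * ‖y s‖ + C₂ * ‖δ s‖ := by
    filter_upwards [hA, hB] with s hAs hBs
    refine (norm_add_le _ _).trans (add_le_add ?_ ?_)
    · calc ‖Matrix.toEuclideanLin (A s) (y s)‖
          = ‖LinearMap.toContinuousLinearMap (Matrix.toEuclideanLin (A s)) (y s)‖ := rfl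
        _ ≤ ‖LinearMap.toContinuousLinearMap (Matrix.toEuclideanLin (A s))‖ * ‖y s‖ :=
            ContinuousLinearMap.le_opNorm _ _
        _ ≤ C₁ * ‖y s‖ := mul_le_mul_of_nonneg_right hAs (norm_nonneg _)
    · calc ‖Matrix.toEuclideanLin (B s) (δ s)‖
          = ‖LinearMap.toContinuousLinearMap (Matrix.toEuclideanLin (B s)) (δ s)‖ := rfl
        _ ≤ ‖LinearMap.toContinuousLinearMap (Matrix.toEuclideanLin (B s))‖ * ‖δ s‖ :=
            ContinuousLinearMap.le_opNorm _ _
        _ ≤ C₂ * ‖δ s‖ := mul_le_mul_of_nonneg_right hBs (norm_nonneg _)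
  have hyint : IntegrableOn (fun s => ‖y s‖) (Icc (0:ℝ) T) volume :=
    (hy.norm.integrableOn_compact isCompact_Icc)
  -- key integral inequality
  have key : ∀ t ∈ Icc (0:ℝ) T, ‖y t‖ ≤ K0 + C₁ * ∫ s in (0:ℝ)..t, ‖y s‖ := by
    intro t ht
    have hsub : Ioc (0:ℝ) t ⊆ Icc (0:ℝ) T := fun x hx => ⟨hx.1.le, hx.2.trans ht.2⟩
    have hboundt : ∀ᵐ s ∂(volume.restrict (Ioc (0:ℝ) t)),
        ‖Matrix.toEuclideanLin (A s) (y s) + Matrix.toEuclideanLin (B s) (δ s)‖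
          ≤ C₁ * ‖y s‖ + C₂ * ‖δ s‖ :=
      ae_restrict_of_ae_restrict_of_subset hsub hbound
    have hyI : IntegrableOn (fun s => ‖y s‖) (Ioc (0:ℝ) t) volume := hyint.mono_set hsub
    have hδI : IntegrableOn (fun s => ‖δ s‖) (Ioc (0:ℝ) t) volume := hδint.mono_set hsub
    have hgI : IntegrableOn (fun s => C₁ * ‖y s‖ + C₂ * ‖δ s‖) (Ioc (0:ℝ) t) volume :=
      (hyI.const_mul C₁).add (hδI.const_mul C₂)
    rw [heq t ht, intervalIntegral.integral_of_le ht.1]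
    calc ‖∫ s in Ioc (0:ℝ) t, (Matrix.toEuclideanLin (A s) (y s)
            + Matrix.toEuclideanLin (B s) (δ s))‖
        ≤ ∫ s in Ioc (0:ℝ) t, (C₁ * ‖y s‖ + C₂ * ‖δ s‖) :=
          norm_integral_le_of_norm_le hgI hboundt
      _ = C₁ * (∫ s in Ioc (0:ℝ) t, ‖y s‖) + C₂ * ∫ s in Ioc (0:ℝ) t, ‖δ s‖ := by
          rw [integral_add (hyI.const_mul C₁) (hδI.const_mul C₂),
            integral_const_mul, integral_const_mul]
      _ ≤ C₁ * (∫ s in Ioc (0:ℝ) t, ‖y s‖) + C₂ * ∫ s in Icc (0:ℝ) T, ‖δ s‖ := by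
          gcongr
          · exact ae_of_all _ fun s => norm_nonneg _
      _ ≤ C₁ * (∫ s in Ioc (0:ℝ) t, ‖y s‖) + C₂ * (Real.sqrt T * Real.sqrt I) := by
          gcongr
      _ = K0 + C₁ * ∫ s in (0:ℝ)..t, ‖y s‖ := by
          rw [intervalIntegral.integral_of_le ht.1, hK0def]; ring
  -- extended norm function
  set Y : ℝ → ℝ := fun s => ‖Set.IccExtend hT.le (fun u : Icc (0:ℝ) T => y u) s‖ with hYdef
  have hYc : Continuous Y := by
    apply continuous_norm.comp
    rw [continuous_IccExtend_iff]
    exact continuousOn_iff_continuous_restrict.1 hy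
  have hYeq : ∀ s ∈ Icc (0:ℝ) T, Y s = ‖y s‖ := fun s hs => by
    rw [hYdef]; simp only [Set.IccExtend_of_mem hT.le _ hs]
  have hYnn : ∀ s, 0 ≤ Y s := fun s => norm_nonneg _
  set φ : ℝ → ℝ := fun t => ∫ s in (0:ℝ)..t, Y s with hφdef
  have hφd : ∀ x, HasDerivAt φ (Y x) x := fun x =>
    (hYc.integral_hasStrictDerivAt 0 x).hasDerivAt
  have hφc : ContinuousOn φ (Icc (0:ℝ) T) :=
    fun x _ => ((hφd x).continuousAt).continuousWithinAt
  have hφeq : ∀ t ∈ Icc (0:ℝ) T, φ t = ∫ s in (0:ℝ)..t, ‖y s‖ := by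
    intro t ht
    refine intervalIntegral.integral_congr fun s hs => ?_
    refine hYeq s ?_
    rw [uIcc_of_le ht.1] at hs
    exact ⟨hs.1, hs.2.trans ht.2⟩
  have hφnn : ∀ t ∈ Icc (0:ℝ) T, 0 ≤ φ t := fun t ht =>
    intervalIntegral.integral_nonneg ht.1 fun s _ => hYnn s
  have gron : ∀ x ∈ Icc (0:ℝ) T, ‖φ x‖ ≤ gronwallBound 0 C₁ K0 (x - 0) := by
    refine norm_le_gronwallBound_of_norm_deriv_right_le hφc
      (fun x _ => (hφd x).hasDerivWithinAt) ?_ ?_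
    · simp [hφdef]
    · intro x hx
      have hx' : x ∈ Icc (0:ℝ) T := ⟨hx.1, hx.2.le⟩
      rw [Real.norm_of_nonneg (hYnn x), Real.norm_of_nonneg (hφnn x hx'), hYeq x hx']
      have := key x hx'
      rw [← hφeq x hx'] at this
      linarith
  -- conclusion
  intro s hs
  have h1 : ‖y s‖ ≤ K0 + C₁ * φ s := by
    have := key s hs; rw [← hφeq s hs] at this; exact this
  have h2 : φ s ≤ gronwallBound 0 C₁ K0 (s - 0) :=
    (le_abs_self _).trans (gron s hs)
  have h3 : K0 + C₁ * gronwallBound 0 C₁ K0 (s - 0) ≤ K0 * Real.exp (C₁ * T) := by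
    rcases eq_or_lt_of_le hC₁ with h | h
    · rw [← h]; simp [gronwallBound_K0]
    · rw [gronwallBound_of_K_ne_0 h.ne']
      have hK : K0 + C₁ * (0 * Real.exp (C₁ * (s - 0))
          + K0 / C₁ * (Real.exp (C₁ * (s - 0)) - 1)) = K0 * Real.exp (C₁ * s) := by
        field_simp; ring
      rw [hK]
      have : Real.exp (C₁ * s) ≤ Real.exp (C₁ * T) :=
        Real.exp_le_exp.2 (mul_le_mul_of_nonneg_left hs.2 hC₁)
      nlinarith
  have : ‖y s‖ ≤ K0 * Real.exp (C₁ * T) := by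
    refine h1.trans (le_trans ?_ h3)
    have := mul_le_mul_of_nonneg_left h2 hC₁
    linarith
  calc ‖y s‖ ≤ K0 * Real.exp (C₁ * T) := this
    _ = C₂ * Real.sqrt T * Real.exp (C₁ * T) * Real.sqrt I := by rw [hK0def]; ring
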